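/- (Boas–Khavinson, lower bound.) Let n ≥ 1 and let f(z) = Σ_α c_α z^α (sum over multi-indices α ∈ ℕⁿ, z^α = z₁^{α₁}···z_n^{α_n}) be a power series converging at every point of the open unit polydisk U₁ = {z ∈ ℂⁿ : |z_j| < 1 for all j}, with |f(z)| < 1 on U₁. Then for every z ∈ ℂⁿ with |z_j| < 1/(3√n) for all j, one has Σ_α |c_α z^α| < 1. -/

import Mathlib

open Metric Set
open scoped ENNReal NNReal

private lemma bk_ofScalars_coeff (a : ℕ → ℂ) (n : ℕ) :
    (FormalMultilinearSeries.ofScalars ℂ a).coeff n = a n := by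
  simp only [FormalMultilinearSeries.coeff, FormalMultilinearSeries.ofScalars,
    ContinuousMultilinearMap.smul_apply, ContinuousMultilinearMap.mkPiAlgebraFin_apply,
    smul_eq_mul]
  rw [show ((1 : Fin n → ℂ)) = (fun _ => (1:ℂ)) from rfl, List.ofFn_const,
    List.prod_replicate, one_pow, mul_one]

private lemma bk_hasFPSB (a : ℕ → ℂ)
    (hs : ∀ y : ℂ, ‖y‖ < 1 → Summable fun j => ‖a j * y ^ j‖) :
    HasFPowerSeriesOnBall (fun y => ∑' j, a j * y ^ j)
      (FormalMultilinearSeries.ofScalars ℂ a) 0 1 := by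
  constructor
  · refine ENNReal.le_of_forall_nnreal_lt fun r hr => ?_
    refine FormalMultilinearSeries.le_radius_of_summable_norm _ ?_
    have hr1 : ‖((r : ℝ) : ℂ)‖ < 1 := by
      simpa using (by exact_mod_cast hr : (r : ℝ) < 1)
    have := hs ((r : ℝ) : ℂ) hr1
    refine this.congr fun n => ?_
    rw [FormalMultilinearSeries.ofScalars_norm, norm_mul, norm_pow]
    norm_num
  · exact one_pos
  · intro y hy
    have hy' : ‖y‖ < 1 := by
      rw [← ENNReal.coe_one, Metric.eball_coe, NNReal.coe_one, mem_ball_zero_iff] at hy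
      exact hy
    have := ((hs y hy').of_norm).hasSum
    simp only [FormalMultilinearSeries.ofScalars_apply_eq, smul_eq_mul, zero_add]
    exact this

private lemma bk_tsum_zero (a : ℕ → ℂ) : ∑' j, a j * (0:ℂ) ^ j = a 0 := by
  rw [tsum_eq_single 0 (fun b hb => by simp [zero_pow hb])]
  simp

private lemma bk_mobius (u v : ℂ) (hu : ‖u‖ < 1) (hv : ‖v‖ < 1)
    (hden : 1 - (starRingEnd ℂ) u * v ≠ 0) :
    ‖(v - u) / (1 - (starRingEnd ℂ) u * v)‖ < 1 := by
  rw [norm_div, div_lt_one (norm_pos_iff.2 hden)]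
  have key : Complex.normSq (1 - (starRingEnd ℂ) u * v) - Complex.normSq (v - u)
      = (1 - Complex.normSq u) * (1 - Complex.normSq v) := by
    simp only [Complex.normSq_apply, Complex.sub_re, Complex.sub_im, Complex.mul_re,
      Complex.mul_im, Complex.one_re, Complex.one_im, Complex.conj_re, Complex.conj_im]
    ring
  have h1 : Complex.normSq u = ‖u‖ ^ 2 := by
    rw [← Complex.sq_norm]
  have h2 : Complex.normSq v = ‖v‖ ^ 2 := by
    rw [← Complex.sq_norm]
  have h3 : Complex.normSq (v - u) = ‖v - u‖ ^ 2 := by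
    rw [← Complex.sq_norm]
  have h4 : Complex.normSq (1 - (starRingEnd ℂ) u * v) = ‖1 - (starRingEnd ℂ) u * v‖ ^ 2 := by
    rw [← Complex.sq_norm]
  rw [h1, h2, h3, h4] at key
  have e1 : (0:ℝ) < 1 - ‖u‖ ^ 2 := by nlinarith [norm_nonneg u]
  have e2 : (0:ℝ) < 1 - ‖v‖ ^ 2 := by nlinarith [norm_nonneg v]
  have hpos : (0:ℝ) < (1 - ‖u‖ ^ 2) * (1 - ‖v‖ ^ 2) := mul_pos e1 e2
  have hsq : ‖v - u‖ ^ 2 < ‖1 - (starRingEnd ℂ) u * v‖ ^ 2 := by linarith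
  exact lt_of_pow_lt_pow_left₀ 2 (norm_nonneg _) hsq

private lemma bk_den_ne (u v : ℂ) (hu : ‖u‖ < 1) (hv : ‖v‖ < 1) :
    1 - (starRingEnd ℂ) u * v ≠ 0 := by
  intro h
  have h2 : (1:ℂ) = (starRingEnd ℂ) u * v := by linear_combination h
  have : (1:ℝ) = ‖(starRingEnd ℂ) u * v‖ := by rw [← h2]; simp
  rw [norm_mul, RCLike.norm_conj] at this
  nlinarith [norm_nonneg u, norm_nonneg v]

private lemma bk_wiener1 (a : ℕ → ℂ)
    (hs : ∀ y : ℂ, ‖y‖ < 1 → Summable fun j => ‖a j * y ^ j‖)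
    (hb : ∀ y : ℂ, ‖y‖ < 1 → ‖∑' j, a j * y ^ j‖ < 1) :
    ‖a 1‖ ≤ 1 - ‖a 0‖ ^ 2 := by
  set g : ℂ → ℂ := fun y => ∑' j, a j * y ^ j with hgdef
  have hps := bk_hasFPSB a hs
  have hg0 : g 0 = a 0 := bk_tsum_zero a
  have ha0 : ‖a 0‖ < 1 := hg0 ▸ hb 0 (by norm_num)
  have hgb : ∀ y ∈ ball (0:ℂ) 1, ‖g y‖ < 1 := fun y hy => hb y (mem_ball_zero_iff.1 hy)
  have hball : Metric.eball (0:ℂ) 1 = ball (0:ℂ) 1 := by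
    rw [show (1:ℝ≥0∞) = ((1:ℝ≥0):ℝ≥0∞) by norm_num, Metric.emetric_ball_nnreal]; norm_num
  have hdiffg : DifferentiableOn ℂ g (ball (0:ℂ) 1) := hball ▸ hps.differentiableOn
  set u := a 0 with hu
  have hden : ∀ y ∈ ball (0:ℂ) 1, 1 - (starRingEnd ℂ) u * g y ≠ 0 :=
    fun y hy => bk_den_ne u (g y) ha0 (hgb y hy)
  set φ : ℂ → ℂ := fun y => (g y - u) / (1 - (starRingEnd ℂ) u * g y) with hφdef
  have hdiffφ : DifferentiableOn ℂ φ (ball (0:ℂ) 1) := by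
    apply DifferentiableOn.div
    · exact hdiffg.sub (differentiableOn_const u)
    · exact (differentiableOn_const 1).sub ((differentiableOn_const _).mul hdiffg)
    · exact hden
  have hφ0 : φ 0 = 0 := by simp [hφdef, hg0, hu]
  have hmaps : Set.MapsTo φ (ball (0:ℂ) 1) (ball (φ 0) 1) := by
    rw [hφ0]
    intro y hy
    rw [mem_ball_zero_iff]
    exact bk_mobius u (g y) ha0 (hgb y hy) (hden y hy)
  have hschwarz : ‖deriv φ 0‖ ≤ 1 / 1 :=
    Complex.norm_deriv_le_div_of_mapsTo_ball hdiffφ (hmaps.mono_right ball_subset_closedBall) one_pos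
  -- compute deriv φ 0
  have hgd : HasDerivAt g (a 1) 0 := by
    have h := hps.hasFPowerSeriesAt.hasDerivAt
    have : (FormalMultilinearSeries.ofScalars ℂ a 1 fun _ => (1:ℂ)) = a 1 :=
      bk_ofScalars_coeff a 1
    rwa [this] at h
  have h1 : HasDerivAt (fun y => g y - u) (a 1) 0 := hgd.sub_const u
  have h2 : HasDerivAt (fun y => 1 - (starRingEnd ℂ) u * g y) (-((starRingEnd ℂ) u * a 1)) 0 := by
    simpa using (hgd.const_mul ((starRingEnd ℂ) u)).const_sub 1
  have hd0 : 1 - (starRingEnd ℂ) u * g 0 ≠ 0 := hden 0 (mem_ball_self one_pos)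
  have hφd : HasDerivAt φ
      ((a 1 * (1 - (starRingEnd ℂ) u * g 0) - (g 0 - u) * -((starRingEnd ℂ) u * a 1)) /
        (1 - (starRingEnd ℂ) u * g 0) ^ 2) 0 := h1.div h2 hd0
  have hsq : (starRingEnd ℂ) u * u = (Complex.normSq u : ℂ) := by
    rw [mul_comm]; exact Complex.mul_conj u
  set t : ℝ := Complex.normSq u with ht
  have ht1 : t < 1 := by
    rw [ht, ← Complex.sq_norm]
    have h := ha0
    nlinarith [norm_nonneg u]
  have htpos : (0:ℝ) < 1 - t := by linarith
  have hne : (1:ℂ) - (t:ℂ) ≠ 0 := by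
    intro h
    have := congrArg Complex.re h
    simp at this
    linarith
  have hderiv : deriv φ 0 = a 1 / (1 - (t:ℂ)) := by
    rw [hφd.deriv, hg0, sub_self, zero_mul, sub_zero, hsq]
    field_simp
  have : ‖a 1 / (1 - (t:ℂ))‖ ≤ 1 := by
    rw [← hderiv]; simpa using hschwarz
  rw [norm_div] at this
  have habs : ‖(1 - (t:ℂ))‖ = 1 - t := by
    rw [show (1:ℂ) - (t:ℂ) = ((1 - t : ℝ) : ℂ) by push_cast; ring, Complex.norm_real, Real.norm_eq_abs,
      abs_of_pos htpos]
  rw [habs, div_le_one htpos] at this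
  have : ‖a 1‖ ≤ 1 - t := this
  rw [ht, ← Complex.sq_norm] at this
  exact this

private lemma bk_root_sum (m : ℕ) (hm : 1 ≤ m) (j : ℕ) :
    ∑ k ∈ Finset.range m, (Complex.exp (2 * Real.pi * Complex.I / m) ^ j) ^ k
      = if m ∣ j then (m : ℂ) else 0 := by
  set ω := Complex.exp (2 * Real.pi * Complex.I / m) with hω
  have hprim : IsPrimitiveRoot ω m := Complex.isPrimitiveRoot_exp m (by omega)
  by_cases hd : m ∣ j
  · have h1 : ω ^ j = 1 := (hprim.pow_eq_one_iff_dvd j).2 hd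
    simp [h1, hd]
  · have h1 : ω ^ j ≠ 1 := fun h => hd ((hprim.pow_eq_one_iff_dvd j).1 h)
    rw [geom_sum_eq h1, if_neg hd]
    have h2 : (ω ^ j) ^ m = 1 := by
      rw [← pow_mul, mul_comm, pow_mul, hprim.pow_eq_one, one_pow]
    rw [h2, sub_self, zero_div]

private lemma bk_omega_norm (m : ℕ) (hm : 1 ≤ m) :
    ‖Complex.exp (2 * Real.pi * Complex.I / m)‖ = 1 := by
  rw [show (2 * Real.pi * Complex.I / m) = ((2 * Real.pi / m : ℝ) : ℂ) * Complex.I by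
    push_cast; ring]
  exact Complex.norm_exp_ofReal_mul_I _

private lemma bk_wiener (a : ℕ → ℂ)
    (hs : ∀ y : ℂ, ‖y‖ < 1 → Summable fun j => ‖a j * y ^ j‖)
    (hb : ∀ y : ℂ, ‖y‖ < 1 → ‖∑' j, a j * y ^ j‖ < 1)
    (m : ℕ) (hm : 1 ≤ m) : ‖a m‖ ≤ 1 - ‖a 0‖ ^ 2 := by
  set ω := Complex.exp (2 * Real.pi * Complex.I / m) with hω
  have hωn : ‖ω‖ = 1 := bk_omega_norm m hm
  set b : ℕ → ℂ := fun j => a (j * m) with hbdef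
  have hinj : Function.Injective (fun j : ℕ => j * m) := fun i j h => by
    exact Nat.eq_of_mul_eq_mul_right (by omega) h
  -- roots in the disk
  have hroot : ∀ μ : ℂ, ‖μ‖ < 1 → ∃ l : ℂ, l ^ m = μ ∧ ‖l‖ < 1 := by
    intro μ hμ
    obtain ⟨l, hl⟩ := IsAlgClosed.exists_pow_nat_eq μ (show 0 < m by omega)
    refine ⟨l, hl, ?_⟩
    by_contra h
    push_neg at h
    have : (1:ℝ) ≤ ‖l‖ ^ m := one_le_pow₀ h
    rw [← norm_pow, hl] at this
    linarith
  have hsummul : ∀ (l : ℂ), ‖l‖ < 1 → Summable fun j => ‖b j * (l ^ m) ^ j‖ := by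
    intro l hl
    have h1 := (hs l hl).comp_injective hinj
    refine h1.congr fun j => ?_
    simp only [Function.comp_apply, hbdef]
    rw [← pow_mul, mul_comm j m]
  have hs' : ∀ μ : ℂ, ‖μ‖ < 1 → Summable fun j => ‖b j * μ ^ j‖ := by
    intro μ hμ
    obtain ⟨l, hlm, hl⟩ := hroot μ hμ
    simpa [hlm] using hsummul l hl
  have hnorm_base : ∀ (k : ℕ) (l : ℂ), ‖l‖ < 1 → ‖ω ^ k * l‖ < 1 := by
    intro k l hl
    rw [norm_mul, norm_pow, hωn, one_pow, one_mul]
    exact hl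
  have hpt : ∀ (l : ℂ) (j : ℕ), (m : ℂ)⁻¹ * ∑ k ∈ Finset.range m, a j * (ω ^ k * l) ^ j
      = if m ∣ j then a j * l ^ j else 0 := by
    intro l j
    have h1 : ∀ k, a j * (ω ^ k * l) ^ j = a j * l ^ j * (ω ^ j) ^ k := by
      intro k; rw [mul_pow, ← pow_mul, mul_comm k j, pow_mul]; ring
    simp only [h1]
    rw [← Finset.mul_sum, hω, bk_root_sum m hm j]
    have hm0 : (m:ℂ) ≠ 0 := by
      exact_mod_cast Nat.cast_ne_zero.mpr (by omega)
    split_ifs with h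
    · field_simp
    · simp
  have hid : ∀ (l : ℂ), ‖l‖ < 1 →
      ∑' j, b j * (l ^ m) ^ j
        = (m : ℂ)⁻¹ * ∑ k ∈ Finset.range m, ∑' j, a j * (ω ^ k * l) ^ j := by
    intro l hl
    have hsum_each : ∀ k ∈ Finset.range m, Summable fun j => a j * (ω ^ k * l) ^ j :=
      fun k _ => (hs _ (hnorm_base k l hl)).of_norm
    rw [← Summable.tsum_finsetSum hsum_each, ← tsum_mul_left]
    have hstep : ∑' j, (m : ℂ)⁻¹ * ∑ k ∈ Finset.range m, a j * (ω ^ k * l) ^ j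
        = ∑' j, (if m ∣ j then a j * l ^ j else 0) := tsum_congr fun j => hpt l j
    rw [hstep]
    have hsupp : Function.support (fun j => if m ∣ j then a j * l ^ j else 0)
        ⊆ Set.range (fun j : ℕ => j * m) := by
      intro j hj
      rw [Function.mem_support] at hj
      by_cases h : m ∣ j
      · obtain ⟨t, rfl⟩ := h
        exact ⟨t, mul_comm t m⟩
      · simp [h] at hj
    rw [← Function.Injective.tsum_eq hinj hsupp]
    apply tsum_congr
    intro i
    show b i * (l ^ m) ^ i = if m ∣ i * m then a (i * m) * l ^ (i * m) else 0
    rw [if_pos (dvd_mul_left m i), hbdef]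
    rw [← pow_mul, mul_comm m i]
  have hb2 : ∀ μ : ℂ, ‖μ‖ < 1 → ‖∑' j, b j * μ ^ j‖ < 1 := by
    intro μ hμ
    obtain ⟨l, hlm, hl⟩ := hroot μ hμ
    rw [← hlm, hid l hl, norm_mul]
    have hmR : (0:ℝ) < m := by exact_mod_cast (by omega : 0 < m)
    have h1 : ‖(m:ℂ)⁻¹‖ = (m:ℝ)⁻¹ := by simp
    rw [h1]
    have h2 : ‖∑ k ∈ Finset.range m, ∑' j, a j * (ω ^ k * l) ^ j‖ < m :=
      calc ‖∑ k ∈ Finset.range m, ∑' j, a j * (ω ^ k * l) ^ j‖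
          ≤ ∑ k ∈ Finset.range m, ‖∑' j, a j * (ω ^ k * l) ^ j‖ := norm_sum_le _ _
        _ < ∑ _k ∈ Finset.range m, 1 := by
            apply Finset.sum_lt_sum_of_nonempty
            · rw [Finset.nonempty_range_iff]; omega
            · exact fun k _ => hb _ (hnorm_base k l hl)
        _ = m := by simp
    calc (m:ℝ)⁻¹ * ‖∑ k ∈ Finset.range m, ∑' j, a j * (ω ^ k * l) ^ j‖
        < (m:ℝ)⁻¹ * m := by
          exact mul_lt_mul_of_pos_left h2 (by positivity)
      _ = 1 := inv_mul_cancel₀ (ne_of_gt hmR)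
  have hfin := bk_wiener1 b hs' hb2
  have hb1 : b 1 = a m := by rw [hbdef]; simp
  have hb0 : b 0 = a 0 := by rw [hbdef]; simp
  rw [hb1, hb0] at hfin
  exact hfin

private def bkT (n m : ℕ) : Finset (Fin n → ℕ) := Finset.piAntidiag Finset.univ m

private lemma bk_mem_T (n m : ℕ) (α : Fin n → ℕ) : α ∈ bkT n m ↔ ∑ j, α j = m := by
  simp [bkT, Finset.mem_piAntidiag]

private def bkEquiv (n : ℕ) : (Σ m : ℕ, {α : Fin n → ℕ // α ∈ bkT n m}) ≃ (Fin n → ℕ) :=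
  (Equiv.sigmaCongrRight fun m => Equiv.subtypeEquivRight fun α => (bk_mem_T n m α)).trans
    (Equiv.sigmaFiberEquiv (fun α : Fin n → ℕ => ∑ j, α j))

private lemma bkEquiv_apply (n : ℕ) (p : Σ m : ℕ, {α : Fin n → ℕ // α ∈ bkT n m}) :
    bkEquiv n p = p.2.1 := rfl

private lemma bk_regroup {E : Type*} [NormedAddCommGroup E] [CompleteSpace E]
    (n : ℕ) (F : (Fin n → ℕ) → E) (hF : Summable F) :
    (Summable fun m => ∑ α ∈ bkT n m, F α) ∧
      ∑' α, F α = ∑' m, ∑ α ∈ bkT n m, F α := by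
  have he : Summable (F ∘ (bkEquiv n)) := (bkEquiv n).summable_iff.mpr hF
  have hinner : ∀ m, ∑' (x : {α : Fin n → ℕ // α ∈ bkT n m}), (F ∘ (bkEquiv n)) ⟨m, x⟩
      = ∑ α ∈ bkT n m, F α := by
    intro m
    have : ∀ x : {α : Fin n → ℕ // α ∈ bkT n m}, (F ∘ (bkEquiv n)) ⟨m, x⟩ = F x.1 :=
      fun x => rfl
    rw [tsum_congr this]
    exact Finset.tsum_subtype _ F
  constructor
  · have := he.sigma
    exact this.congr fun m => hinner m
  · calc ∑' α, F α = ∑' p, (F ∘ bkEquiv n) p := ((bkEquiv n).tsum_eq F).symm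
      _ = ∑' m, ∑' (x : {α : Fin n → ℕ // α ∈ bkT n m}), (F ∘ bkEquiv n) ⟨m, x⟩ :=
          he.tsum_sigma
      _ = ∑' m, ∑ α ∈ bkT n m, F α := tsum_congr hinner

private lemma bk_prod_smul (n : ℕ) (w : Fin n → ℂ) (y : ℂ) (α : Fin n → ℕ) :
    ∏ j, (y * w j) ^ α j = y ^ (∑ j, α j) * ∏ j, w j ^ α j := by
  rw [← Finset.prod_pow_eq_pow_sum, ← Finset.prod_mul_distrib]
  exact Finset.prod_congr rfl fun j _ => (mul_pow _ _ _)

section Main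

variable {n : ℕ} {c : (Fin n → ℕ) → ℂ}

private lemma bk_slice
    (hconv : ∀ z : Fin n → ℂ, (∀ j, ‖z j‖ < 1) →
      Summable (fun α : Fin n → ℕ => ‖c α * ∏ j, z j ^ α j‖))
    (w : Fin n → ℂ) (hw : ∀ j, ‖w j‖ ≤ 1) (y : ℂ) (hy : ‖y‖ < 1) :
    (Summable fun m => ‖(∑ α ∈ bkT n m, c α * ∏ j, w j ^ α j) * y ^ m‖) ∧
      ∑' m, (∑ α ∈ bkT n m, c α * ∏ j, w j ^ α j) * y ^ m
        = ∑' α : Fin n → ℕ, c α * ∏ j, (y * w j) ^ α j := by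
  set z : Fin n → ℂ := fun j => y * w j with hz
  have hzlt : ∀ j, ‖z j‖ < 1 := by
    intro j
    rw [hz]
    simp only [norm_mul]
    calc ‖y‖ * ‖w j‖ ≤ ‖y‖ * 1 := by
          exact mul_le_mul_of_nonneg_left (hw j) (norm_nonneg y)
      _ = ‖y‖ := mul_one _
      _ < 1 := hy
  have hFn : Summable (fun α : Fin n → ℕ => ‖c α * ∏ j, z j ^ α j‖) := hconv z hzlt
  have hF : Summable (fun α : Fin n → ℕ => c α * ∏ j, z j ^ α j) := hFn.of_norm
  have hgroup : ∀ m, ∑ α ∈ bkT n m, c α * ∏ j, z j ^ α j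
      = (∑ α ∈ bkT n m, c α * ∏ j, w j ^ α j) * y ^ m := by
    intro m
    rw [Finset.sum_mul]
    refine Finset.sum_congr rfl fun α hα => ?_
    rw [hz]
    simp only []
    rw [bk_prod_smul n w y α, (bk_mem_T n m α).1 hα]
    ring
  obtain ⟨hsumm, heq⟩ := bk_regroup n _ hF
  obtain ⟨hsumm', _⟩ := bk_regroup n _ hFn
  constructor
  · refine Summable.of_nonneg_of_le (fun m => norm_nonneg _) (fun m => ?_) hsumm'
    rw [← hgroup m]
    exact norm_sum_le _ _
  · have h2 : ∑' m, (∑ α ∈ bkT n m, c α * ∏ j, w j ^ α j) * y ^ m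
        = ∑' m, ∑ α ∈ bkT n m, c α * ∏ j, z j ^ α j := tsum_congr fun m => (hgroup m).symm
    rw [h2, ← heq]

private lemma bk_zroot_sum (N : ℕ) (hN : 1 ≤ N) (d : ℤ) (hd : d.natAbs < N) :
    ∑ t ∈ Finset.range N, Complex.exp (2 * Real.pi * Complex.I / N) ^ ((t : ℤ) * d)
      = if d = 0 then (N : ℂ) else 0 := by
  set ζ := Complex.exp (2 * Real.pi * Complex.I / N) with hζ
  have hprim : IsPrimitiveRoot ζ N := Complex.isPrimitiveRoot_exp N (by omega)
  by_cases h : d = 0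
  · simp [h]
  · rw [if_neg h]
    have hne : ζ ^ d ≠ 1 := by
      intro hone
      have := (hprim.zpow_eq_one_iff_dvd d).1 hone
      obtain ⟨k, rfl⟩ := this
      rcases eq_or_ne k 0 with rfl | hk
      · simp at h
      · have h1 : (N : ℤ).natAbs * k.natAbs < N := by
          rwa [← Int.natAbs_mul]
        have h2 : (N : ℤ).natAbs = N := Int.natAbs_natCast N
        have h3 : 1 ≤ k.natAbs := Int.natAbs_pos.2 hk
        nlinarith
    have hterm : ∀ t : ℕ, ζ ^ ((t : ℤ) * d) = (ζ ^ d) ^ t := by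
      intro t
      rw [mul_comm, zpow_mul, zpow_natCast]
    rw [Finset.sum_congr rfl fun t _ => hterm t, geom_sum_eq hne]
    have hNone : (ζ ^ d) ^ N = 1 := by
      rw [← zpow_natCast, ← zpow_mul, mul_comm, zpow_mul, zpow_natCast, hprim.pow_eq_one,
        one_zpow]
    rw [hNone, sub_self, zero_div]

private lemma bk_c0
    (hbound : ∀ z : Fin n → ℂ, (∀ j, ‖z j‖ < 1) →
      ‖∑' α : Fin n → ℕ, c α * ∏ j, z j ^ α j‖ < 1) : ‖c 0‖ < 1 := by
  have h0 := hbound (fun _ => 0) (fun j => by norm_num)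
  have heq : ∑' α : Fin n → ℕ, c α * ∏ j, (0:ℂ) ^ α j = c 0 := by
    rw [tsum_eq_single 0]
    · simp
    · intro α hα
      obtain ⟨j, hj⟩ := Function.ne_iff.1 hα
      have : (0:ℂ) ^ α j = 0 := zero_pow (by simpa using hj)
      rw [Finset.prod_eq_zero (Finset.mem_univ j) this, mul_zero]
  rwa [heq] at h0

private lemma bk_T_zero : bkT n 0 = {0} := Finset.piAntidiag_zero _

private lemma bk_slice_bound
    (hconv : ∀ z : Fin n → ℂ, (∀ j, ‖z j‖ < 1) →
      Summable (fun α : Fin n → ℕ => ‖c α * ∏ j, z j ^ α j‖))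
    (hbound : ∀ z : Fin n → ℂ, (∀ j, ‖z j‖ < 1) →
      ‖∑' α : Fin n → ℕ, c α * ∏ j, z j ^ α j‖ < 1)
    (w : Fin n → ℂ) (hw : ∀ j, ‖w j‖ ≤ 1) (m : ℕ) (hm : 1 ≤ m) :
    ‖∑ α ∈ bkT n m, c α * ∏ j, w j ^ α j‖ ≤ 1 - ‖c 0‖ ^ 2 := by
  set A : ℕ → ℂ := fun k => ∑ α ∈ bkT n k, c α * ∏ j, w j ^ α j with hA
  have hs' : ∀ y : ℂ, ‖y‖ < 1 → Summable fun k => ‖A k * y ^ k‖ :=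
    fun y hy => (bk_slice hconv w hw y hy).1
  have hb' : ∀ y : ℂ, ‖y‖ < 1 → ‖∑' k, A k * y ^ k‖ < 1 := by
    intro y hy
    rw [(bk_slice hconv w hw y hy).2]
    refine hbound _ fun j => ?_
    simp only [norm_mul]
    calc ‖y‖ * ‖w j‖ ≤ ‖y‖ * 1 := mul_le_mul_of_nonneg_left (hw j) (norm_nonneg y)
      _ = ‖y‖ := mul_one _
      _ < 1 := hy
  have hA0 : A 0 = c 0 := by
    rw [hA]
    simp only []
    rw [bk_T_zero, Finset.sum_singleton]
    simp
  have := bk_wiener A hs' hb' m hm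
  rwa [hA0] at this

private lemma bk_parseval
    (hconv : ∀ z : Fin n → ℂ, (∀ j, ‖z j‖ < 1) →
      Summable (fun α : Fin n → ℕ => ‖c α * ∏ j, z j ^ α j‖))
    (hbound : ∀ z : Fin n → ℂ, (∀ j, ‖z j‖ < 1) →
      ‖∑' α : Fin n → ℕ, c α * ∏ j, z j ^ α j‖ < 1)
    (m : ℕ) (hm : 1 ≤ m) :
    ∑ α ∈ bkT n m, ‖c α‖ ^ 2 ≤ (1 - ‖c 0‖ ^ 2) ^ 2 := by
  set N := m + 1 with hNdef
  set ζ : ℂ := Complex.exp (2 * Real.pi * Complex.I / N) with hζ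
  have hζnorm : ‖ζ‖ = 1 := bk_omega_norm N (by omega)
  have hζne : ζ ≠ 0 := Complex.exp_ne_zero _
  have hnsq : Complex.normSq ζ = 1 := by
    rw [Complex.normSq_eq_norm_sq, hζnorm, one_pow]
  have hconjζ : (starRingEnd ℂ) ζ = ζ⁻¹ := by
    apply eq_inv_of_mul_eq_one_left
    rw [mul_comm, Complex.mul_conj, hnsq, Complex.ofReal_one]
  set B := 1 - ‖c 0‖ ^ 2 with hB
  have hc0 : ‖c 0‖ < 1 := bk_c0 hbound
  have hBnn : 0 ≤ B := by
    rw [hB]; nlinarith [norm_nonneg (c 0)]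
  have hentry : ∀ α ∈ bkT n m, ∀ j, α j < N := by
    intro α hα j
    rw [bk_mem_T] at hα
    have h1 : α j ≤ ∑ i, α i :=
      Finset.single_le_sum (f := α) (fun i _ => Nat.zero_le _) (Finset.mem_univ j)
    omega
  set A : (Fin n → Fin N) → ℂ :=
    fun k => ∑ α ∈ bkT n m, c α * ∏ j, (ζ ^ (k j : ℕ)) ^ α j with hA
  have hAle : ∀ k, ‖A k‖ ≤ B := by
    intro k
    apply bk_slice_bound hconv hbound _ _ m hm
    intro j
    rw [norm_pow, hζnorm, one_pow]
  have hfac : ∀ (t a b : ℕ), (ζ ^ t) ^ a * (starRingEnd ℂ) ((ζ ^ t) ^ b)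
      = ζ ^ ((t : ℤ) * ((a : ℤ) - (b : ℤ))) := by
    intro t a b
    have h1 : (ζ ^ t) ^ a = ζ ^ ((t * a : ℕ) : ℤ) := by rw [zpow_natCast, pow_mul]
    have h2 : (starRingEnd ℂ) ((ζ ^ t) ^ b) = ζ ^ (-((t * b : ℕ) : ℤ)) := by
      rw [map_pow, map_pow, hconjζ, ← pow_mul, ← zpow_natCast ζ⁻¹ (t * b), inv_zpow, ← zpow_neg]
    rw [h1, h2, ← zpow_add₀ hζne]
    congr 1
    push_cast
    ring
  have hexpand : ∀ k, A k * (starRingEnd ℂ) (A k)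
      = ∑ α ∈ bkT n m, ∑ β ∈ bkT n m, (c α * (starRingEnd ℂ) (c β)) *
          ∏ j, ζ ^ (((k j : ℕ) : ℤ) * ((α j : ℤ) - (β j : ℤ))) := by
    intro k
    rw [hA]
    simp only [map_sum]
    rw [Finset.sum_mul_sum]
    refine Finset.sum_congr rfl fun α _ => Finset.sum_congr rfl fun β _ => ?_
    rw [map_mul, map_prod]
    have h1 : ∏ j, ζ ^ (((k j : ℕ) : ℤ) * ((α j : ℤ) - (β j : ℤ)))
        = ∏ j, ((ζ ^ (k j : ℕ)) ^ α j * (starRingEnd ℂ) ((ζ ^ (k j : ℕ)) ^ β j)) :=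
      Finset.prod_congr rfl fun j _ => (hfac (k j) (α j) (β j)).symm
    rw [h1, Finset.prod_mul_distrib]
    ring
  have hinner : ∀ (α β : Fin n → ℕ), α ∈ bkT n m → β ∈ bkT n m →
      ∑ k : Fin n → Fin N, ∏ j, ζ ^ (((k j : ℕ) : ℤ) * ((α j : ℤ) - (β j : ℤ)))
        = if α = β then (N : ℂ) ^ n else 0 := by
    intro α β hα hβ
    have h2 : ∑ k : Fin n → Fin N, ∏ j, ζ ^ (((k j : ℕ) : ℤ) * ((α j : ℤ) - (β j : ℤ)))
        = ∏ j, ∑ t : Fin N, ζ ^ (((t : ℕ) : ℤ) * ((α j : ℤ) - (β j : ℤ))) := by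
      rw [Finset.prod_univ_sum, Fintype.piFinset_univ]
    rw [h2]
    have h3 : ∀ j : Fin n, ∑ t : Fin N, ζ ^ (((t : ℕ) : ℤ) * ((α j : ℤ) - (β j : ℤ)))
        = if ((α j : ℤ) - (β j : ℤ)) = 0 then (N : ℂ) else 0 := by
      intro j
      have hd : ((α j : ℤ) - (β j : ℤ)).natAbs < N := by
        have h4 := hentry α hα j
        have h5 := hentry β hβ j
        omega
      rw [← bk_zroot_sum N (by omega) _ hd]
      exact Fin.sum_univ_eq_sum_range (fun t => ζ ^ ((t : ℤ) * ((α j : ℤ) - (β j : ℤ)))) N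
    rw [Finset.prod_congr rfl fun j _ => h3 j]
    by_cases hab : α = β
    · subst hab
      simp
    · obtain ⟨j, hj⟩ := Function.ne_iff.1 hab
      rw [if_neg hab]
      refine Finset.prod_eq_zero (Finset.mem_univ j) ?_
      rw [if_neg]
      intro h
      apply hj
      have : (α j : ℤ) = (β j : ℤ) := by linarith [sub_eq_zero.1 h]
      exact_mod_cast this
  have hkey : ∑ k : Fin n → Fin N, A k * (starRingEnd ℂ) (A k)
      = ((N : ℂ) ^ n) * ∑ α ∈ bkT n m, c α * (starRingEnd ℂ) (c α) := by
    rw [Finset.sum_congr rfl fun k _ => hexpand k]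
    rw [Finset.sum_comm]
    have h6 : ∀ α ∈ bkT n m,
        ∑ k : Fin n → Fin N, ∑ β ∈ bkT n m, (c α * (starRingEnd ℂ) (c β)) *
            ∏ j, ζ ^ (((k j : ℕ) : ℤ) * ((α j : ℤ) - (β j : ℤ)))
          = (c α * (starRingEnd ℂ) (c α)) * (N : ℂ) ^ n := by
      intro α hα
      rw [Finset.sum_comm]
      have h7 : ∀ β ∈ bkT n m,
          ∑ k : Fin n → Fin N, (c α * (starRingEnd ℂ) (c β)) *
              ∏ j, ζ ^ (((k j : ℕ) : ℤ) * ((α j : ℤ) - (β j : ℤ)))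
            = (c α * (starRingEnd ℂ) (c β)) * (if α = β then (N : ℂ) ^ n else 0) := by
        intro β hβ
        rw [← Finset.mul_sum, hinner α β hα hβ]
      rw [Finset.sum_congr rfl h7]
      simp only [mul_ite, mul_zero]
      rw [Finset.sum_ite_eq (bkT n m) α
        (fun β => c α * (starRingEnd ℂ) (c β) * (N : ℂ) ^ n), if_pos hα]
    rw [Finset.sum_congr rfl h6, ← Finset.sum_mul, mul_comm]
  -- pass to real parts
  have hreal : ∑ k : Fin n → Fin N, Complex.normSq (A k)
      = (N : ℝ) ^ n * ∑ α ∈ bkT n m, Complex.normSq (c α) := by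
    have hL : ((∑ k : Fin n → Fin N, Complex.normSq (A k) : ℝ) : ℂ)
        = ∑ k : Fin n → Fin N, A k * (starRingEnd ℂ) (A k) := by
      push_cast
      exact Finset.sum_congr rfl fun k _ => (Complex.mul_conj (A k)).symm
    have hR : (((N : ℝ) ^ n * ∑ α ∈ bkT n m, Complex.normSq (c α) : ℝ) : ℂ)
        = ((N : ℂ) ^ n) * ∑ α ∈ bkT n m, c α * (starRingEnd ℂ) (c α) := by
      push_cast
      rw [mul_eq_mul_left_iff]
      left
      exact Finset.sum_congr rfl fun α _ => (Complex.mul_conj (c α)).symm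
    have := hL.trans (hkey.trans hR.symm)
    exact_mod_cast this
  have hNpos : (0:ℝ) < (N : ℝ) ^ n := by positivity
  have hcard : (Finset.univ : Finset (Fin n → Fin N)).card = N ^ n := by
    simp [Fintype.card_pi]
  have hfinal : (N : ℝ) ^ n * ∑ α ∈ bkT n m, ‖c α‖ ^ 2 ≤ (N : ℝ) ^ n * B ^ 2 := by
    have h8 : ∑ α ∈ bkT n m, ‖c α‖ ^ 2 = ∑ α ∈ bkT n m, Complex.normSq (c α) :=
      Finset.sum_congr rfl fun α _ => by
        rw [Complex.normSq_eq_norm_sq]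
    rw [h8, ← hreal]
    calc ∑ k : Fin n → Fin N, Complex.normSq (A k)
        = ∑ k : Fin n → Fin N, ‖A k‖ ^ 2 := Finset.sum_congr rfl fun k _ => by
          rw [Complex.normSq_eq_norm_sq]
      _ ≤ ∑ _k : Fin n → Fin N, B ^ 2 := Finset.sum_le_sum fun k _ =>
          pow_le_pow_left₀ (norm_nonneg _) (hAle k) 2
      _ = (N : ℝ) ^ n * B ^ 2 := by
          rw [Finset.sum_const, hcard, nsmul_eq_mul]
          push_cast
          ring
  exact le_of_mul_le_mul_left hfinal hNpos

private lemma bk_multinomial_bound (x : Fin n → ℝ) (hx : ∀ j, 0 ≤ x j) (m : ℕ) :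
    ∑ α ∈ bkT n m, ∏ j, x j ^ α j ≤ (∑ j, x j) ^ m := by
  rw [Finset.sum_pow_eq_sum_piAntidiag Finset.univ x m]
  unfold bkT
  refine Finset.sum_le_sum fun α hα => ?_
  have h1 : (0:ℝ) ≤ ∏ j, x j ^ α j := Finset.prod_nonneg fun j _ => pow_nonneg (hx j) _
  have h2 : (1:ℝ) ≤ (Nat.multinomial Finset.univ α : ℝ) := by
    exact_mod_cast Nat.one_le_iff_ne_zero.2 (Nat.multinomial_pos _ _).ne'
  nlinarith

theorem boas_khavinson_lower_aux (hn : 1 ≤ n)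
    (hconv : ∀ z : Fin n → ℂ, (∀ j, ‖z j‖ < 1) →
      Summable (fun α : Fin n → ℕ => ‖c α * ∏ j, z j ^ α j‖))
    (hbound : ∀ z : Fin n → ℂ, (∀ j, ‖z j‖ < 1) →
      ‖∑' α : Fin n → ℕ, c α * ∏ j, z j ^ α j‖ < 1) :
    ∀ z : Fin n → ℂ, (∀ j, ‖z j‖ < 1 / (3 * Real.sqrt n)) →
      ∑' α : Fin n → ℕ, ‖c α * ∏ j, z j ^ α j‖ < 1 := by
  intro z hz
  have hsqrt1 : (1:ℝ) ≤ Real.sqrt n := by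
    rw [show (1:ℝ) = Real.sqrt 1 by simp]
    exact Real.sqrt_le_sqrt (by exact_mod_cast hn)
  have hz1 : ∀ j, ‖z j‖ < 1 := by
    intro j
    calc ‖z j‖ < 1 / (3 * Real.sqrt n) := hz j
      _ ≤ 1 := by
        rw [div_le_one (by positivity)]
        nlinarith
  set Q : ℝ := ∑ j, ‖z j‖ ^ 2 with hQ
  have hQnn : 0 ≤ Q := Finset.sum_nonneg fun j _ => sq_nonneg _
  have hQlt : Q < 1 / 9 := by
    have hterm : ∀ j : Fin n, ‖z j‖ ^ 2 < 1 / (9 * n) := by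
      intro j
      have h1 : ‖z j‖ ^ 2 < (1 / (3 * Real.sqrt n)) ^ 2 :=
        pow_lt_pow_left₀ (hz j) (norm_nonneg _) (by norm_num)
      have h2 : ((1:ℝ) / (3 * Real.sqrt n)) ^ 2 = 1 / (9 * n) := by
        rw [div_pow, mul_pow, Real.sq_sqrt (by positivity : (0:ℝ) ≤ (n:ℝ))]
        norm_num
      linarith
    calc Q < ∑ _j : Fin n, 1 / (9 * (n:ℝ)) := by
          apply Finset.sum_lt_sum_of_nonempty
          · rw [Finset.univ_nonempty_iff]
            exact Fin.pos_iff_nonempty.1 (by omega)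
          · exact fun j _ => hterm j
      _ = 1 / 9 := by
          rw [Finset.sum_const, Finset.card_univ, Fintype.card_fin, nsmul_eq_mul]
          have hn0 : (n:ℝ) ≠ 0 := by positivity
          field_simp
  set q : ℝ := Real.sqrt Q with hq
  have hqnn : 0 ≤ q := Real.sqrt_nonneg _
  have hq3 : q < 1 / 3 := by
    rw [hq, show (1:ℝ)/3 = Real.sqrt (1/9) by
      rw [show (1:ℝ)/9 = (1/3)^2 by norm_num, Real.sqrt_sq (by norm_num)]]
    exact Real.sqrt_lt_sqrt hQnn hQlt
  have hq1 : q < 1 := by linarith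
  set B : ℝ := 1 - ‖c 0‖ ^ 2 with hB
  have hc0 : ‖c 0‖ < 1 := bk_c0 hbound
  have hBpos : 0 < B := by rw [hB]; nlinarith [norm_nonneg (c 0)]
  set F : (Fin n → ℕ) → ℝ := fun α => ‖c α * ∏ j, z j ^ α j‖ with hF
  have hFs : Summable F := hconv z hz1
  obtain ⟨hsumm, heq⟩ := bk_regroup n F hFs
  set t : ℕ → ℝ := fun m => ∑ α ∈ bkT n m, F α with ht
  have ht0 : t 0 = ‖c 0‖ := by
    rw [ht]
    simp only []
    rw [bk_T_zero, Finset.sum_singleton, hF]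
    simp
  -- Cauchy–Schwarz bound for each degree
  have htm : ∀ m, 1 ≤ m → t m ≤ B * q ^ m := by
    intro m hm
    have hcs : (t m) ^ 2 ≤ (∑ α ∈ bkT n m, ‖c α‖ ^ 2) *
        (∑ α ∈ bkT n m, (∏ j, ‖z j‖ ^ α j) ^ 2) := by
      have h1 : t m = ∑ α ∈ bkT n m, ‖c α‖ * ∏ j, ‖z j‖ ^ α j := by
        rw [ht]
        refine Finset.sum_congr rfl fun α _ => ?_
        rw [hF]
        simp only []
        rw [norm_mul]
        congr 1
        rw [norm_prod]
        exact Finset.prod_congr rfl fun j _ => norm_pow _ _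
      rw [h1]
      exact Finset.sum_mul_sq_le_sq_mul_sq _ _ _
    have hsq : ∑ α ∈ bkT n m, (∏ j, ‖z j‖ ^ α j) ^ 2 ≤ Q ^ m := by
      have h2 : ∀ α : Fin n → ℕ, (∏ j, ‖z j‖ ^ α j) ^ 2 = ∏ j, (‖z j‖ ^ 2) ^ α j := by
        intro α
        rw [← Finset.prod_pow]
        exact Finset.prod_congr rfl fun j _ => by
          rw [← pow_mul, ← pow_mul, mul_comm]
      rw [Finset.sum_congr rfl fun α _ => h2 α]
      exact bk_multinomial_bound _ (fun j => sq_nonneg _) m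
    have hpar := bk_parseval hconv hbound m hm
    have hts : (t m) ^ 2 ≤ (B * q ^ m) ^ 2 := by
      have hQq : Q ^ m = (q ^ m) ^ 2 := by
        rw [hq, ← pow_mul, mul_comm m 2, pow_mul, Real.sq_sqrt hQnn]
      calc (t m) ^ 2 ≤ (∑ α ∈ bkT n m, ‖c α‖ ^ 2) *
            (∑ α ∈ bkT n m, (∏ j, ‖z j‖ ^ α j) ^ 2) := hcs
        _ ≤ B ^ 2 * Q ^ m := by
            apply mul_le_mul hpar hsq
            · exact Finset.sum_nonneg fun α _ => sq_nonneg _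
            · exact sq_nonneg B
        _ = (B * q ^ m) ^ 2 := by rw [hQq]; ring
    have htnn : 0 ≤ t m := Finset.sum_nonneg fun α _ => norm_nonneg _
    have hBq : 0 ≤ B * q ^ m := mul_nonneg hBpos.le (pow_nonneg hqnn m)
    nlinarith [hts, htnn, hBq]
  -- geometric series assembly
  rw [heq]
  have hsumm1 : Summable fun m => t (m + 1) := (summable_nat_add_iff 1).2 hsumm
  have hgeo : Summable fun m : ℕ => B * q * q ^ m := Summable.mul_left _ (summable_geometric_of_lt_one hqnn hq1)
  have hle : ∑' m, t (m + 1) ≤ B * q * (1 - q)⁻¹ := by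
    calc ∑' m, t (m + 1) ≤ ∑' m : ℕ, B * q * q ^ m := by
          apply Summable.tsum_le_tsum _ hsumm1 hgeo
          intro m
          calc t (m + 1) ≤ B * q ^ (m + 1) := htm (m + 1) (by omega)
            _ = B * q * q ^ m := by ring
      _ = B * q * (1 - q)⁻¹ := by
          rw [tsum_mul_left, tsum_geometric_of_lt_one hqnn hq1]
  have hfrac : q * (1 - q)⁻¹ < 1 / 2 := by
    rw [← div_eq_mul_inv, div_lt_iff₀ (by linarith)]
    linarith
  calc ∑' m, t m = t 0 + ∑' m, t (m + 1) := Summable.tsum_eq_zero_add hsumm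
    _ ≤ ‖c 0‖ + B * q * (1 - q)⁻¹ := by rw [ht0]; linarith
    _ < ‖c 0‖ + B * (1 / 2) := by
        have : B * (q * (1 - q)⁻¹) < B * (1 / 2) := by
          exact mul_lt_mul_of_pos_left hfrac hBpos
        nlinarith [this]
    _ ≤ 1 := by rw [hB]; nlinarith [norm_nonneg (c 0), hc0]

end Main

/-- Boas–Khavinson lower bound for the Bohr radius of the unit polydisk. -/
theorem boas_khavinson_lower (n : ℕ) (hn : 1 ≤ n) (c : (Fin n → ℕ) → ℂ)
    (hconv : ∀ z : Fin n → ℂ, (∀ j, ‖z j‖ < 1) →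
      Summable (fun α : Fin n → ℕ => ‖c α * ∏ j, z j ^ α j‖))
    (hbound : ∀ z : Fin n → ℂ, (∀ j, ‖z j‖ < 1) →
      ‖∑' α : Fin n → ℕ, c α * ∏ j, z j ^ α j‖ < 1) :
    ∀ z : Fin n → ℂ, (∀ j, ‖z j‖ < 1 / (3 * Real.sqrt n)) →
      ∑' α : Fin n → ℕ, ‖c α * ∏ j, z j ^ α j‖ < 1 :=
  boas_khavinson_lower_aux hn hconv hbound
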